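/- arXiv:1511.09227 — 3 statements merged into one kernel-verified Lean document; each statement's English description precedes it below -/
import Mathlib

section
/- Let g : ℝ → ℝ be Lipschitz with compact support. Then ∫_ℝ g(x₂)² e^{-α|x₂| tan θ} sgn(x₂) dx₂ = (2 cot θ / α) ∫_ℝ g(x₂) g'(x₂) e^{-α|x₂| tan θ} dx₂, where g' is the almost-everywhere defined derivative of g and sgn is the sign function. -/
open Real MeasureTheory Set Filter
open scoped NNReal

/-- `F α t = ∫_{-∞}^t e^{-α|x|} dx`. -/
noncomputable def F (α t : ℝ) : ℝ := ∫ x in Iio t, exp (-α * |x|)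

/-- The half-plane-like domain `Ω = {(x₁,x₂) : x₁ < x₂ tan θ}`. -/
def Omg (θ : ℝ) : Set (ℝ × ℝ) := {p | p.1 < p.2 * tan θ}

/-- The functional `R(g) = ∫ g'·(g'·F(x tanθ) − g·e^{-α|x|tanθ}·cot θ) dx`. -/
noncomputable def Rfun (α θ : ℝ) (g : ℝ → ℝ) : ℝ :=
  ∫ x : ℝ, deriv g x *
    (deriv g x * F α (x * tan θ) - g x * exp (-α * |x| * tan θ) * cot θ)

/-- The quantity `Λ(θ)` from the upper bound for the lowest eigenvalue. -/
noncomputable def Lam (θ : ℝ) : ℝ :=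
  3 * cos θ ^ 6 * ((2:ℝ) ^ (2 * cos θ ^ 2) - 1) ^ 2 /
    (2 * (1 + 2 * cos θ ^ 2) ^ 3 *
      (108 + 180 * cos θ ^ 2 - 132 * cos θ ^ 4 + 45 * cos θ ^ 6 - 5 * cos θ ^ 8))

lemma exp_neg_abs_lipschitz {β : ℝ} (hβ : 0 ≤ β) :
    LipschitzWith ⟨β, hβ⟩ (fun x : ℝ => Real.exp (-β * |x|)) := by
  have base : ∀ u v : ℝ, v ≤ u → u ≤ 0 → Real.exp u - Real.exp v ≤ u - v := by
    intro u v hvu hu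
    have h1 := Real.add_one_le_exp (v - u)
    have h2 : Real.exp v = Real.exp u * Real.exp (v - u) := by
      rw [← Real.exp_add]; congr 1; ring
    have h3 : Real.exp u ≤ 1 := Real.exp_le_one_iff.mpr hu
    have h4 := Real.exp_pos u
    nlinarith
  have key : ∀ u v : ℝ, u ≤ 0 → v ≤ 0 → |Real.exp u - Real.exp v| ≤ |u - v| := by
    intro u v hu hv
    rw [abs_sub_le_iff]
    rcases le_total v u with h | h
    · have h1 := base u v h hu
      have h2 : Real.exp v ≤ Real.exp u := Real.exp_le_exp.mpr h
      constructor <;> [skip; skip] <;>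
        · have := le_abs_self (u - v); have := neg_abs_le (u - v); linarith
    · have h1 := base v u h hv
      have h2 : Real.exp u ≤ Real.exp v := Real.exp_le_exp.mpr h
      constructor <;>
        · have := le_abs_self (u - v); have := neg_abs_le (u - v); linarith
  apply LipschitzWith.of_dist_le_mul
  intro x y
  simp only [Real.dist_eq, NNReal.coe_mk]
  calc |Real.exp (-β * |x|) - Real.exp (-β * |y|)| ≤ |(-β * |x|) - (-β * |y|)| :=
        key _ _ (by rw [neg_mul]; exact neg_nonpos.mpr (mul_nonneg hβ (abs_nonneg x)))
          (by rw [neg_mul]; exact neg_nonpos.mpr (mul_nonneg hβ (abs_nonneg y)))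
    _ = β * |(|x| - |y|)| := by
        rw [show (-β * |x|) - (-β * |y|) = β * (|y| - |x|) by ring, abs_mul,
          abs_of_nonneg hβ, abs_sub_comm]
    _ ≤ β * |x - y| := by
        exact mul_le_mul_of_nonneg_left (abs_abs_sub_abs_le_abs_sub x y) hβ

lemma sq_lipschitz {K : ℝ≥0} {g : ℝ → ℝ} (hK : LipschitzWith K g) {M : ℝ} (hM0 : 0 ≤ M)
    (hM : ∀ x, ‖g x‖ ≤ M) : LipschitzWith ((2 : ℝ≥0) * ⟨M, hM0⟩ * K) (fun x => g x ^ 2) := by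
  apply LipschitzWith.of_dist_le_mul
  intro x y
  have hd := hK.dist_le_mul x y
  simp only [Real.dist_eq] at hd ⊢
  push_cast [NNReal.coe_mk]
  have h1 : |g x ^ 2 - g y ^ 2| = |g x + g y| * |g x - g y| := by
    rw [← abs_mul]; congr 1; ring
  have h2 : |g x + g y| ≤ 2 * M := by
    have := hM x; have := hM y
    simp only [Real.norm_eq_abs] at *
    have := abs_add_le (g x) (g y)
    linarith
  rw [h1]
  calc |g x + g y| * |g x - g y| ≤ (2 * M) * (K * |x - y|) :=
        mul_le_mul h2 hd (abs_nonneg _) (by linarith)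
    _ = 2 * M * K * |x - y| := by ring

/-- integration-by-parts identity for Lipschitz `g` with compact
support. -/
theorem integration_by_parts_sign (α θ : ℝ) (hα : 0 < α) (hθ : θ ∈ Ioo 0 (π/2))
    (g : ℝ → ℝ) (hlip : ∃ K, LipschitzWith K g) (hsupp : HasCompactSupport g) :
    ∫ x : ℝ, g x ^ 2 * exp (-α * |x| * tan θ) * Real.sign x
      = (2 * cot θ / α) * ∫ x : ℝ, g x * deriv g x * exp (-α * |x| * tan θ) := by
  obtain ⟨K, hK⟩ := hlip
  obtain ⟨θ0, θtop⟩ := hθ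
  have hpi := Real.pi_pos
  have hcos : 0 < Real.cos θ := Real.cos_pos_of_mem_Ioo ⟨by linarith, θtop⟩
  have hsin : 0 < Real.sin θ := Real.sin_pos_of_pos_of_lt_pi θ0 (by linarith)
  have htan : 0 < Real.tan θ := Real.tan_pos_of_pos_of_lt_pi_div_two θ0 θtop
  set β := α * Real.tan θ with hβdef
  have hβ : 0 < β := mul_pos hα htan
  set f : ℝ → ℝ := fun x => Real.exp (-α * |x| * Real.tan θ) with hfdef
  have hfeq : (fun x : ℝ => Real.exp (-β * |x|)) = f := by
    funext x; simp only [hfdef]; congr 1; rw [hβdef]; ring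
  have hf_lip : LipschitzWith ⟨β, hβ.le⟩ f := hfeq ▸ exp_neg_abs_lipschitz hβ.le
  obtain ⟨M, hM⟩ := hsupp.exists_bound_of_continuous hK.continuous
  have hM0 : 0 ≤ M := le_trans (norm_nonneg _) (hM 0)
  have hG_lip : LipschitzWith ((2 : ℝ≥0) * ⟨M, hM0⟩ * K) (fun x => g x ^ 2) := sq_lipschitz hK hM0 hM
  have hGsupp : HasCompactSupport (fun x : ℝ => g x ^ 2) :=
    HasCompactSupport.comp_left (g := fun t : ℝ => t ^ 2) hsupp (by norm_num)
  have main := hf_lip.integral_lineDeriv_mul_eq (μ := volume) hG_lip hGsupp (1 : ℝ)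
  -- derivative of f away from 0
  have hfd : ∀ x : ℝ, x ≠ 0 →
      HasDerivAt f (-β * Real.exp (-α * |x| * Real.tan θ) * Real.sign x) x := by
    intro x hx
    rcases hx.lt_or_gt with hneg | hpos
    · have h1 : HasDerivAt (fun y : ℝ => Real.exp (β * y)) (Real.exp (β * x) * β) x := by
        simpa using ((hasDerivAt_id x).const_mul β).exp
      have h2 : f =ᶠ[nhds x] fun y => Real.exp (β * y) := by
        filter_upwards [Iio_mem_nhds hneg] with y (hy : y < 0)
        simp only [hfdef, abs_of_neg hy]; congr 1; rw [hβdef]; ring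
      have h3 := h1.congr_of_eventuallyEq h2
      convert h3 using 1
      · rfl
      · rfl
      rw [Real.sign_of_neg hneg, abs_of_neg hneg, hβdef]; ring_nf
    · have h1 : HasDerivAt (fun y : ℝ => Real.exp (-β * y)) (Real.exp (-β * x) * -β) x := by
        simpa using ((hasDerivAt_id x).const_mul (-β)).exp
      have h2 : f =ᶠ[nhds x] fun y => Real.exp (-β * y) := by
        filter_upwards [Ioi_mem_nhds hpos] with y (hy : 0 < y)
        simp only [hfdef, abs_of_pos hy]; congr 1; rw [hβdef]; ring
      have h3 := h1.congr_of_eventuallyEq h2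
      convert h3 using 1
      · rfl
      · rfl
      rw [Real.sign_of_pos hpos, abs_of_pos hpos, hβdef]; ring_nf
  have h0 : ∀ᵐ x : ℝ, x ≠ 0 := by
    rw [ae_iff]
    simp only [not_not, Set.setOf_eq_eq_singleton]
    exact measure_singleton 0
  have hleft : (fun x => lineDeriv ℝ f x 1 * g x ^ 2) =ᵐ[volume]
      fun x => (-β) * (g x ^ 2 * Real.exp (-α * |x| * Real.tan θ) * Real.sign x) := by
    filter_upwards [h0] with x hx
    have hd := hfd x hx
    rw [hd.differentiableAt.lineDeriv_eq_fderiv, fderiv_apply_one_eq_deriv, hd.deriv]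
    ring
  have hright : (fun x => lineDeriv ℝ (fun y => g y ^ 2) x (-1) * f x) =ᵐ[volume]
      fun x => (-2) * (g x * deriv g x * Real.exp (-α * |x| * Real.tan θ)) := by
    filter_upwards [hK.ae_differentiableAt (μ := volume)] with x hx
    have hG' : HasDerivAt (fun y => g y ^ 2) (2 * g x * deriv g x) x := by
      simpa [pow_one] using hx.hasDerivAt.fun_pow 2
    rw [lineDeriv_neg, hG'.differentiableAt.lineDeriv_eq_fderiv, fderiv_apply_one_eq_deriv, hG'.deriv,
      hfdef]
    ring
  rw [integral_congr_ae hleft, integral_congr_ae hright, integral_const_mul,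
    integral_const_mul] at main
  have hc : 2 * Real.cot θ / α = 2 / β := by
    rw [Real.cot_eq_cos_div_sin, hβdef, Real.tan_eq_sin_div_cos]
    field_simp
  have hβne : β ≠ 0 := hβ.ne'
  rw [hc, div_mul_eq_mul_div, eq_div_iff hβne]
  linarith [main]
end

section
/- For every ρ ∈ (0, cot²θ), the function g_ρ(x₂) = F(x₂ tan θ)^ρ satisfies R(g_ρ) = ρ tan²θ (ρ − cot²θ) ∫_ℝ e^{-2α|x₂| tan θ} F(x₂ tan θ)^{2ρ−1} dx₂, the integral on the right-hand side is finite, and consequently R(g_ρ) < 0. -/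
open Real MeasureTheory Set Filter

lemma myIntExp {b : ℝ} (hb : 0 < b) : Integrable (fun x : ℝ => exp (-b * |x|)) := by
  have h1 : IntegrableOn (fun x : ℝ => exp (-b * |x|)) (Ioi 0) := by
    refine ((exp_neg_integrableOn_Ioi 0 hb).congr_fun ?_ measurableSet_Ioi)
    intro x hx; simp [abs_of_pos (mem_Ioi.mp hx)]
  have h1' : Integrable ((Ioi (0:ℝ)).indicator (fun x : ℝ => exp (-b * |x|))) :=
    (integrable_indicator_iff measurableSet_Ioi).mpr h1
  have h2' := h1'.comp_neg
  have heq : (fun x : ℝ => (Ioi (0:ℝ)).indicator (fun x : ℝ => exp (-b * |x|)) (-x))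
      = (Iio (0:ℝ)).indicator (fun x : ℝ => exp (-b * |x|)) := by
    funext x
    by_cases hx : x < 0
    · rw [indicator_of_mem (by simpa using hx), indicator_of_mem (by simpa using hx)]
      simp [abs_neg]
    · rw [indicator_of_notMem (by simpa using hx), indicator_of_notMem (by simpa using hx)]
  rw [heq] at h2'
  have h2 : IntegrableOn (fun x : ℝ => exp (-b * |x|)) (Iio 0) :=
    (integrable_indicator_iff measurableSet_Iio).mp h2'
  have h2'' : IntegrableOn (fun x : ℝ => exp (-b * |x|)) (Iic 0) := by
    rwa [integrableOn_Iic_iff_integrableOn_Iio]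
  have := h2''.union h1
  rwa [Iic_union_Ioi, integrableOn_univ] at this


lemma F_lb {α : ℝ} (hα : 0 < α) (t : ℝ) : exp (-α * (|t| + 1)) ≤ F α t := by
  have hsub : Ioo (t-1) t ⊆ Iio t := Ioo_subset_Iio_self
  have h1 : ∫ x in Ioo (t-1) t, exp (-α * (|t|+1)) ≤ ∫ x in Ioo (t-1) t, exp (-α * |x|) := by
    apply setIntegral_mono_on (integrableOn_const (by simp))
      ((myIntExp hα).integrableOn) measurableSet_Ioo
    intro x hx
    apply exp_le_exp.mpr
    have : |x| ≤ |t| + 1 := by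
      rw [abs_le]; constructor <;> [nlinarith [neg_abs_le t, hx.1]; nlinarith [le_abs_self t, hx.2]]
    nlinarith
  have h2 : ∫ x in Ioo (t-1) t, exp (-α * (|t|+1)) = exp (-α * (|t|+1)) := by
    simp [Real.volume_Ioo]
  have h3 : ∫ x in Ioo (t-1) t, exp (-α * |x|) ≤ F α t := by
    apply setIntegral_mono_set ((myIntExp hα).integrableOn)
      (Eventually.of_forall fun x => (exp_pos _).le) (HasSubset.Subset.eventuallyLE hsub)
  linarith [h1, h3, h2.symm.le]

lemma F_pos {α : ℝ} (hα : 0 < α) (t : ℝ) : 0 < F α t :=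
  lt_of_lt_of_le (exp_pos _) (F_lb hα t)

lemma F_le {α : ℝ} (hα : 0 < α) (t : ℝ) : F α t ≤ ∫ x : ℝ, exp (-α * |x|) :=
  setIntegral_le_integral (myIntExp hα) (Eventually.of_forall fun x => (exp_pos _).le)

lemma F_hasDeriv {α : ℝ} (hα : 0 < α) (t : ℝ) : HasDerivAt (F α) (exp (-α * |t|)) t := by
  have hint := myIntExp hα
  have hcont : Continuous fun x : ℝ => exp (-α * |x|) := by fun_prop
  have key : ∀ s : ℝ, F α s = F α 0 + ∫ x in (0:ℝ)..s, exp (-α * |x|) := by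
    intro s
    have h1 : ∀ u : ℝ, F α u = ∫ x in Iic u, exp (-α * |x|) := fun u =>
      setIntegral_congr_set Iio_ae_eq_Iic
    rw [h1, h1, ← intervalIntegral.integral_Iic_sub_Iic hint.integrableOn hint.integrableOn]
    ring
  have hd : HasDerivAt (fun s => F α 0 + ∫ x in (0:ℝ)..s, exp (-α * |x|)) (exp (-α * |t|)) t := by
    apply HasDerivAt.const_add
    exact intervalIntegral.integral_hasDerivAt_right hint.intervalIntegrable
      (hcont.stronglyMeasurableAtFilter _ _) hcont.continuousAt
  exact hd.congr_deriv rfl |>.congr_of_eventuallyEq (Eventually.of_forall fun s => (key s))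

/-- value and negativity of `R(g_ρ)` for `g_ρ(x) = F(x tanθ)^ρ`,
`ρ ∈ (0, cot²θ)`. -/
theorem R_of_g_rho_neg (α θ : ℝ) (hα : 0 < α) (hθ : θ ∈ Ioo 0 (π/2))
    (ρ : ℝ) (hρ : ρ ∈ Ioo 0 (cot θ ^ 2)) :
    Rfun α θ (fun x => F α (x * tan θ) ^ ρ)
        = ρ * tan θ ^ 2 * (ρ - cot θ ^ 2) *
          ∫ x : ℝ, exp (-2 * α * |x| * tan θ) * F α (x * tan θ) ^ (2 * ρ - 1)
    ∧ Integrable (fun x : ℝ => exp (-2 * α * |x| * tan θ) * F α (x * tan θ) ^ (2 * ρ - 1))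
    ∧ Rfun α θ (fun x => F α (x * tan θ) ^ ρ) < 0 := by
  obtain ⟨hθ0, hθ1⟩ := hθ
  obtain ⟨hρ0, hρ1⟩ := hρ
  have hπ := pi_pos
  have hcos : 0 < cos θ := Real.cos_pos_of_mem_Ioo ⟨by linarith, hθ1⟩
  have hsin : 0 < sin θ := Real.sin_pos_of_pos_of_lt_pi hθ0 (by linarith)
  have hT : 0 < tan θ := Real.tan_pos_of_pos_of_lt_pi_div_two hθ0 hθ1
  have hct : Real.cot θ * tan θ = 1 := by
    rw [Real.cot_eq_cos_div_sin, Real.tan_eq_sin_div_cos]; field_simp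
  have hFpos : ∀ x : ℝ, 0 < F α (x * tan θ) := fun x => F_pos hα _
  have habs : ∀ x : ℝ, |x * tan θ| = |x| * tan θ := fun x => by
    rw [abs_mul, abs_of_pos hT]
  -- derivative of g
  have hg : ∀ x : ℝ, HasDerivAt (fun x => F α (x * tan θ) ^ ρ)
      (exp (-α * |x| * tan θ) * tan θ * ρ * F α (x * tan θ) ^ (ρ - 1)) x := by
    intro x
    have h1 : HasDerivAt (fun x : ℝ => x * tan θ) (tan θ) x := hasDerivAt_mul_const _
    have h2 := (F_hasDeriv hα (x * tan θ)).comp x h1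
    have h3 := h2.rpow_const (p := ρ) (Or.inl (hFpos x).ne')
    have e1 : -α * |x * tan θ| = -α * |x| * tan θ := by rw [habs]; ring
    rw [e1] at h3
    exact h3
  -- pointwise identity
  have key : ∀ x : ℝ,
      deriv (fun x => F α (x * tan θ) ^ ρ) x *
        (deriv (fun x => F α (x * tan θ) ^ ρ) x * F α (x * tan θ)
          - F α (x * tan θ) ^ ρ * exp (-α * |x| * tan θ) * Real.cot θ)
      = ρ * tan θ ^ 2 * (ρ - Real.cot θ ^ 2) *
          (exp (-2 * α * |x| * tan θ) * F α (x * tan θ) ^ (2 * ρ - 1)) := by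
    intro x
    have hFx := hFpos x
    rw [(hg x).deriv]
    have hA : F α (x * tan θ) ^ ρ = F α (x * tan θ) ^ (ρ - 1) * F α (x * tan θ) := by
      rw [← Real.rpow_add_one hFx.ne']; norm_num
    have h2ρ : F α (x * tan θ) ^ (2 * ρ - 1)
        = F α (x * tan θ) ^ (ρ - 1) * F α (x * tan θ) ^ (ρ - 1) * F α (x * tan θ) := by
      rw [← Real.rpow_add hFx, ← Real.rpow_add_one hFx.ne']; congr 1; ring
    have hE2 : exp (-2 * α * |x| * tan θ)
        = exp (-α * |x| * tan θ) * exp (-α * |x| * tan θ) := by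
      rw [← Real.exp_add]; congr 1; ring
    rw [hA, h2ρ, hE2]
    linear_combination (ρ * exp (-α * |x| * tan θ) ^ 2 * (F α (x * tan θ) ^ (ρ - 1)) ^ 2 *
      F α (x * tan θ) * tan θ * Real.cot θ) * hct
  -- the equality
  have heq : Rfun α θ (fun x => F α (x * tan θ) ^ ρ)
      = ρ * tan θ ^ 2 * (ρ - Real.cot θ ^ 2) *
        ∫ x : ℝ, exp (-2 * α * |x| * tan θ) * F α (x * tan θ) ^ (2 * ρ - 1) := by
    unfold Rfun
    rw [← integral_const_mul]
    exact integral_congr_ae (Eventually.of_forall key)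
  -- integrability
  set s : ℝ := 2 * ρ - 1 with hs
  set M : ℝ := ∫ x : ℝ, exp (-α * |x|) with hM
  have hMpos : 0 < M := lt_of_lt_of_le (F_pos hα 0) (F_le hα 0)
  have hbound : ∀ x : ℝ, F α (x * tan θ) ^ s
      ≤ M ^ s + exp (-α * (|x * tan θ| + 1)) ^ s := by
    intro x
    rcases le_or_gt 0 s with h | h
    · have := Real.rpow_le_rpow (hFpos x).le (F_le hα _) h
      have h2 : (0:ℝ) ≤ exp (-α * (|x * tan θ| + 1)) ^ s := Real.rpow_nonneg (exp_pos _).le _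
      linarith
    · have := Real.rpow_le_rpow_of_nonpos (exp_pos _) (F_lb hα (x * tan θ)) h.le
      have h2 : (0:ℝ) ≤ M ^ s := Real.rpow_nonneg hMpos.le _
      linarith
  have hcontF : Continuous (F α) := by
    rw [continuous_iff_continuousAt]
    exact fun x => (F_hasDeriv hα x).differentiableAt.continuousAt
  have hfc : Continuous (fun x : ℝ => exp (-2 * α * |x| * tan θ) * F α (x * tan θ) ^ s) := by
    apply Continuous.mul (by fun_prop)
    exact (hcontF.comp (continuous_id.mul continuous_const)).rpow_const
      (fun x => Or.inl (hFpos x).ne')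
  have hs2 : 0 < 2 + s := by simp [hs]; linarith
  have hBint : Integrable (fun x : ℝ =>
      M ^ s * exp (-(2 * α * tan θ) * |x|) + exp (-α * s) * exp (-((2 + s) * α * tan θ) * |x|)) := by
    exact ((myIntExp (by positivity)).const_mul _).add ((myIntExp (by positivity : (0:ℝ) < (2 + s) * α * tan θ)).const_mul _)
  have hfpos : ∀ x : ℝ, 0 < exp (-2 * α * |x| * tan θ) * F α (x * tan θ) ^ s :=
    fun x => mul_pos (exp_pos _) (Real.rpow_pos_of_pos (hFpos x) _)
  have hint : Integrable (fun x : ℝ => exp (-2 * α * |x| * tan θ) * F α (x * tan θ) ^ s) := by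
    apply Integrable.mono' hBint hfc.aestronglyMeasurable
    filter_upwards with x
    rw [Real.norm_of_nonneg (hfpos x).le]
    have h1 := hbound x
    have h2 : exp (-2 * α * |x| * tan θ) * (M ^ s + exp (-α * (|x * tan θ| + 1)) ^ s)
        = M ^ s * exp (-(2 * α * tan θ) * |x|) + exp (-α * s) * exp (-((2 + s) * α * tan θ) * |x|) := by
      rw [← Real.exp_mul, mul_add, ← Real.exp_add, ← Real.exp_add, habs]
      rw [show -2 * α * |x| * tan θ + -α * (|x| * tan θ + 1) * s
          = -α * s + -((2 + s) * α * tan θ) * |x| from by ring]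
      rw [mul_comm (exp (-2 * α * |x| * tan θ)) (M ^ s),
        show -2 * α * |x| * tan θ = -(2 * α * tan θ) * |x| from by ring]
    calc exp (-2 * α * |x| * tan θ) * F α (x * tan θ) ^ s
        ≤ exp (-2 * α * |x| * tan θ) * (M ^ s + exp (-α * (|x * tan θ| + 1)) ^ s) :=
          mul_le_mul_of_nonneg_left h1 (exp_pos _).le
      _ = _ := h2
  -- positivity of the integral
  have hipos : 0 < ∫ x : ℝ, exp (-2 * α * |x| * tan θ) * F α (x * tan θ) ^ s := by
    rw [integral_pos_iff_support_of_nonneg (fun x => (hfpos x).le) hint]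
    have : Function.support (fun x : ℝ => exp (-2 * α * |x| * tan θ) * F α (x * tan θ) ^ s)
        = univ := eq_univ_of_forall fun x => (hfpos x).ne'
    rw [this]
    simp
  have hC : ρ * tan θ ^ 2 * (ρ - Real.cot θ ^ 2) < 0 :=
    mul_neg_of_pos_of_neg (mul_pos hρ0 (pow_pos hT 2)) (by linarith)
  exact ⟨heq, hint, heq ▸ mul_neg_of_neg_of_pos hC hipos⟩
end

section
/- Set ρ = cos²θ, let χ(t) = min(1, max(0, 2 − |t|)), and for n > 0 define u_n(x₁,x₂) = e^{-α|x₁|/2} · F(x₂ tan θ)^ρ · χ(x₂/n). Then for every n > 0, ∫_Ω u_n(x)² dx ≤ 6 (1 + 2cos²θ) n / α^{2cos²θ+1}. -/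
open Real MeasureTheory Set Filter

set_option maxHeartbeats 2000000 in
/-- bound on the squared `L²(Ω)`-norm of the trial function `u_n`
for `ρ = cos²θ` and the piecewise-linear cutoff. -/
theorem trial_function_norm_bound (α θ : ℝ) (hα : 0 < α) (hθ : θ ∈ Ioo 0 (π/2))
    (n : ℝ) (hn : 0 < n) :
    ∀ u : ℝ × ℝ → ℝ,
      u = (fun p => exp (-α * |p.1| / 2) * F α (p.2 * tan θ) ^ (cos θ ^ 2) *
            min 1 (max 0 (2 - |p.2 / n|))) →
      (∫ x in Omg θ, (u x) ^ 2)
        ≤ 6 * (1 + 2 * cos θ ^ 2) * n / α ^ (2 * cos θ ^ 2 + 1) := by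
  intro u hu
  obtain ⟨hθ0, hθ2⟩ := hθ
  have hπ : 0 < π := pi_pos
  have hcos : 0 < cos θ := cos_pos_of_mem_Ioo ⟨by linarith, hθ2⟩
  have htan : 0 < tan θ := tan_pos_of_pos_of_lt_pi_div_two hθ0 hθ2
  set ρ : ℝ := cos θ ^ 2 with hρdef
  have hρ0 : 0 < ρ := by positivity
  have hρ1 : ρ ≤ 1 := by
    have := cos_sq_le_one θ; simpa [hρdef] using this
  -- basic integrability of the kernel
  have hIioInt : IntegrableOn (fun x => exp (-α * |x|)) (Iio (0:ℝ)) := by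
    have w : Integrable ((Ioi (0:ℝ)).indicator fun x => exp (-α * x)) := by
      rw [integrable_indicator_iff measurableSet_Ioi]
      exact exp_neg_integrableOn_Ioi 0 hα
    have w2 := w.comp_neg
    rw [← integrable_indicator_iff measurableSet_Iio]
    refine w2.congr (ae_of_all _ fun x => ?_)
    by_cases hx : x < 0
    · simp [indicator_of_mem, hx, mem_Ioi, neg_pos.2 hx, abs_of_neg hx, mul_neg, mem_Iio]
    · push_neg at hx
      simp [mem_Ioi, mem_Iio, not_lt.2 hx, indicator, not_lt.2 (neg_nonpos.2 hx)]
  have hIciInt : IntegrableOn (fun x => exp (-α * |x|)) (Ici (0:ℝ)) := by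
    rw [integrableOn_Ici_iff_integrableOn_Ioi]
    refine (exp_neg_integrableOn_Ioi 0 hα).congr_fun (fun x hx => ?_) measurableSet_Ioi
    rw [abs_of_pos hx]
  have hInt : Integrable (fun x => exp (-α * |x|)) := by
    rw [← integrableOn_univ, ← Iio_union_Ici (a := (0:ℝ))]
    exact hIioInt.union hIciInt
  have hIioVal : ∫ x in Iio (0:ℝ), exp (-α * |x|) = 1/α := by
    have h1 : ∫ x in Iio (0:ℝ), exp (-α * |x|) = ∫ x in Iio (0:ℝ), exp (α * x) := by
      refine setIntegral_congr_fun measurableSet_Iio fun x hx => ?_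
      rw [abs_of_neg hx]; ring_nf
    rw [h1, setIntegral_congr_set Iio_ae_eq_Iic]
    have h2 : ∫ x in Iic (0:ℝ), exp (α * x) = ∫ x in Ioi (-(0:ℝ)), exp (-(α * x)) := by
      rw [← integral_comp_neg_Iic]; simp [mul_neg]
    rw [h2]
    have h3 := integral_comp_mul_left_Ioi (fun y => exp (-y)) 0 hα
    simp only [mul_zero, smul_eq_mul] at h3
    simp only [neg_zero]
    rw [h3, integral_exp_neg_Ioi_zero]; ring
  have hIciVal : ∫ x in Ici (0:ℝ), exp (-α * |x|) = 1/α := by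
    rw [← setIntegral_congr_set Ioi_ae_eq_Ici]
    have h1 : ∫ x in Ioi (0:ℝ), exp (-α * |x|) = ∫ x in Ioi (0:ℝ), exp (-(α * x)) := by
      refine setIntegral_congr_fun measurableSet_Ioi fun x hx => ?_
      rw [abs_of_pos hx]; ring_nf
    have h3 := integral_comp_mul_left_Ioi (fun y => exp (-y)) 0 hα
    simp only [mul_zero, smul_eq_mul] at h3
    rw [h1, h3, integral_exp_neg_Ioi_zero]; ring
  have hTotVal : ∫ x : ℝ, exp (-α * |x|) = 2/α := by
    rw [← intervalIntegral.integral_Iio_add_Ici hIioInt hIciInt, hIioVal, hIciVal]; ring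
  -- facts about F
  have hF_nonneg : ∀ t, 0 ≤ F α t := fun t =>
    setIntegral_nonneg measurableSet_Iio fun x _ => (exp_pos _).le
  have hF_le2 : ∀ t, F α t ≤ 2/α := fun t => by
    rw [← hTotVal]
    exact setIntegral_le_integral hInt (ae_of_all _ fun x => (exp_pos _).le)
  have hF_le1 : ∀ t, t ≤ 0 → F α t ≤ 1/α := fun t ht => by
    rw [← hIioVal]
    exact setIntegral_mono_set hIioInt
      (ae_of_all _ fun x => (exp_pos _).le)
      (HasSubset.Subset.eventuallyLE (Iio_subset_Iio ht))
  have hFmono : Monotone (F α) := fun a b hab =>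
    setIntegral_mono_set hInt.integrableOn
      (ae_of_all _ fun x => (exp_pos _).le)
      (HasSubset.Subset.eventuallyLE (Iio_subset_Iio hab))
  have hFmeas : Measurable (F α) := hFmono.measurable
  -- measurability of u
  have hrpow : Continuous fun x : ℝ => x ^ ρ :=
    continuous_id.rpow_const fun x => Or.inr hρ0.le
  have hu_meas : Measurable u := by
    rw [hu]
    refine Measurable.mul (Measurable.mul ?_ ?_) ?_
    · exact (((measurable_fst.abs.const_mul (-α)).div_const 2).exp)
    · exact hrpow.measurable.comp (hFmeas.comp (measurable_snd.mul_const _))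
    · fun_prop
  have hΩmeas : MeasurableSet (Omg θ) :=
    measurableSet_lt measurable_fst (measurable_snd.mul_const _)
  -- the dominating function
  obtain ⟨c1, hc1⟩ : ∃ c : ℝ, c = ((1/α) ^ ρ) ^ 2 := ⟨_, rfl⟩
  obtain ⟨c2, hc2⟩ : ∃ c : ℝ, c = ((2/α) ^ ρ) ^ 2 := ⟨_, rfl⟩
  have hc1_nonneg : 0 ≤ c1 := hc1 ▸ sq_nonneg _
  have hc2_nonneg : 0 ≤ c2 := hc2 ▸ sq_nonneg _
  obtain ⟨f1, hf1⟩ : ∃ f : ℝ → ℝ, f = (Iio (0:ℝ)).indicator (fun x => exp (-α * |x|)) :=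
    ⟨_, rfl⟩
  obtain ⟨k1, hk1⟩ : ∃ f : ℝ → ℝ, f = (Icc (-(2*n)) 0).indicator (fun _ => c1) := ⟨_, rfl⟩
  obtain ⟨f2, hf2⟩ : ∃ f : ℝ → ℝ, f = fun x => exp (-α * |x|) := ⟨_, rfl⟩
  obtain ⟨k2, hk2⟩ : ∃ f : ℝ → ℝ, f = (Icc 0 (2*n)).indicator (fun _ => c2) := ⟨_, rfl⟩
  have hf1_nonneg : ∀ x, 0 ≤ f1 x := fun x =>
    hf1 ▸ indicator_nonneg (fun y _ => (exp_pos _).le) x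
  have hk1_nonneg : ∀ x, 0 ≤ k1 x := fun x => hk1 ▸ indicator_nonneg (fun _ _ => hc1_nonneg) x
  have hf2_nonneg : ∀ x, 0 ≤ f2 x := fun x => hf2 ▸ (exp_pos _).le
  have hk2_nonneg : ∀ x, 0 ≤ k2 x := fun x => hk2 ▸ indicator_nonneg (fun _ _ => hc2_nonneg) x
  obtain ⟨h, hh⟩ : ∃ h : ℝ × ℝ → ℝ, h = fun p => f1 p.1 * k1 p.2 + f2 p.1 * k2 p.2 := ⟨_, rfl⟩
  have hh_nonneg : ∀ p, 0 ≤ h p := fun p => by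
    have := mul_nonneg (hf1_nonneg p.1) (hk1_nonneg p.2)
    have := mul_nonneg (hf2_nonneg p.1) (hk2_nonneg p.2)
    rw [hh]; dsimp only; linarith
  -- integrability of h
  have hf1_int : Integrable f1 := hf1 ▸ (integrable_indicator_iff measurableSet_Iio).2 hIioInt
  have hk1_int : Integrable k1 := hk1 ▸ (integrable_indicator_iff measurableSet_Icc).2
    (integrableOn_const measure_Icc_lt_top.ne)
  have hk2_int : Integrable k2 := hk2 ▸ (integrable_indicator_iff measurableSet_Icc).2
    (integrableOn_const measure_Icc_lt_top.ne)
  have hf2_int : Integrable f2 := hf2 ▸ hInt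
  have hprod1 : Integrable (fun p : ℝ × ℝ => f1 p.1 * k1 p.2) := by
    rw [Measure.volume_eq_prod]; exact hf1_int.mul_prod hk1_int
  have hprod2 : Integrable (fun p : ℝ × ℝ => f2 p.1 * k2 p.2) := by
    rw [Measure.volume_eq_prod]; exact hf2_int.mul_prod hk2_int
  have hh_int : Integrable h := by
    rw [hh]; exact hprod1.add hprod2
  -- the pointwise bound on Ω
  have hb : ∀ p ∈ Omg θ, u p ^ 2 ≤ h p := by
    rintro ⟨x, y⟩ hp
    have hp' : x < y * tan θ := hp
    have hχ0 : 0 ≤ min 1 (max 0 (2 - |y / n|)) := le_min zero_le_one (le_max_left _ _)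
    have hχ1 : min 1 (max 0 (2 - |y / n|)) ≤ 1 := min_le_left _ _
    have hE : 0 < exp (-α * |x|) := exp_pos _
    have hu2 : u (x, y) ^ 2 =
        exp (-α * |x|) * (F α (y * tan θ) ^ ρ) ^ 2 * (min 1 (max 0 (2 - |y / n|))) ^ 2 := by
      rw [hu]
      simp only [mul_pow]
      have e : rexp (-α * |x| / 2) ^ 2 = rexp (-α * |x|) := by
        rw [sq, ← Real.exp_add]; ring_nf
      rw [e]
    rcases le_or_gt y 0 with hy | hy
    · rcases lt_or_ge y (-(2*n)) with hy2 | hy2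
      · -- cutoff vanishes
        have : |y / n| ≥ 2 := by
          rw [abs_div, abs_of_pos hn, ge_iff_le, le_div_iff₀ hn]
          rw [abs_of_neg (by linarith : y < 0)]; linarith
        have hχ : min 1 (max 0 (2 - |y / n|)) = 0 := by
          rw [max_eq_left (by linarith), min_eq_right zero_le_one]
        rw [hu2, hχ]
        simpa using hh_nonneg (x, y)
      · -- (x,y) ∈ Iio 0 ×ˢ Icc (-(2n)) 0
        have hx0 : x < 0 := lt_of_lt_of_le hp' (mul_nonpos_iff.2 (Or.inr ⟨hy, htan.le⟩))
        have hFb : F α (y * tan θ) ^ ρ ≤ (1/α) ^ ρ :=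
          rpow_le_rpow (hF_nonneg _)
            (hF_le1 _ (mul_nonpos_iff.2 (Or.inr ⟨hy, htan.le⟩))) hρ0.le
        have hF2 : (F α (y * tan θ) ^ ρ) ^ 2 ≤ c1 := by
          rw [hc1]
          exact pow_le_pow_left₀ (rpow_nonneg (hF_nonneg _) _) hFb 2
        have hm : h (x, y) = exp (-α * |x|) * c1 + f2 x * k2 y := by
          rw [hh]; dsimp only
          rw [hf1, hk1, hf2, indicator_of_mem (mem_Iio.2 hx0),
            indicator_of_mem (mem_Icc.2 ⟨hy2, hy⟩)]
        rw [hu2, hm]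
        have h2 : 0 ≤ f2 x * k2 y := mul_nonneg (hf2_nonneg x) (hk2_nonneg y)
        have hχsq : (min 1 (max 0 (2 - |y / n|))) ^ 2 ≤ 1 := pow_le_one₀ hχ0 hχ1
        have hkey : (F α (y * tan θ) ^ ρ) ^ 2 * (min 1 (max 0 (2 - |y / n|))) ^ 2 ≤ c1 := by
          calc (F α (y * tan θ) ^ ρ) ^ 2 * (min 1 (max 0 (2 - |y / n|))) ^ 2
              ≤ c1 * 1 := mul_le_mul hF2 hχsq (sq_nonneg _) hc1_nonneg
            _ = c1 := mul_one _
        have := mul_le_mul_of_nonneg_left hkey hE.le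
        rw [mul_assoc]
        linarith
    · rcases le_or_gt y (2*n) with hy2 | hy2
      · have hFb : F α (y * tan θ) ^ ρ ≤ (2/α) ^ ρ :=
          rpow_le_rpow (hF_nonneg _) (hF_le2 _) hρ0.le
        have hF2 : (F α (y * tan θ) ^ ρ) ^ 2 ≤ c2 := by
          rw [hc2]
          exact pow_le_pow_left₀ (rpow_nonneg (hF_nonneg _) _) hFb 2
        have hm : h (x, y) = f1 x * k1 y + exp (-α * |x|) * c2 := by
          rw [hh]; dsimp only
          rw [hf2, hk2, indicator_of_mem (mem_Icc.2 ⟨hy.le, hy2⟩)]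
        rw [hu2, hm]
        have h1 : 0 ≤ f1 x * k1 y := mul_nonneg (hf1_nonneg x) (hk1_nonneg y)
        have hχsq : (min 1 (max 0 (2 - |y / n|))) ^ 2 ≤ 1 := pow_le_one₀ hχ0 hχ1
        have hkey : (F α (y * tan θ) ^ ρ) ^ 2 * (min 1 (max 0 (2 - |y / n|))) ^ 2 ≤ c2 := by
          calc (F α (y * tan θ) ^ ρ) ^ 2 * (min 1 (max 0 (2 - |y / n|))) ^ 2
              ≤ c2 * 1 := mul_le_mul hF2 hχsq (sq_nonneg _) hc2_nonneg
            _ = c2 := mul_one _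
        have := mul_le_mul_of_nonneg_left hkey hE.le
        rw [mul_assoc]
        linarith
      · have : |y / n| ≥ 2 := by
          rw [abs_div, abs_of_pos hn, ge_iff_le, le_div_iff₀ hn, abs_of_pos hy]; linarith
        have hχ : min 1 (max 0 (2 - |y / n|)) = 0 := by
          rw [max_eq_left (by linarith), min_eq_right zero_le_one]
        rw [hu2, hχ]
        simpa using hh_nonneg (x, y)
  -- compare the set integral with ∫ h
  have hind_int : Integrable ((Omg θ).indicator fun p => u p ^ 2) := by
    refine hh_int.mono' (((hu_meas.pow_const 2).indicator hΩmeas).aestronglyMeasurable)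
      (ae_of_all _ fun p => ?_)
    rw [Real.norm_eq_abs]
    by_cases hp : p ∈ Omg θ
    · rw [indicator_of_mem hp, abs_of_nonneg (sq_nonneg _)]; exact hb p hp
    · rw [indicator_of_notMem hp, abs_zero]; exact hh_nonneg p
  have step1 : (∫ x in Omg θ, u x ^ 2) ≤ ∫ p, h p := by
    rw [← integral_indicator hΩmeas]
    refine integral_mono hind_int hh_int fun p => ?_
    by_cases hp : p ∈ Omg θ
    · rw [indicator_of_mem hp]; exact hb p hp
    · rw [indicator_of_notMem hp]; exact hh_nonneg p
  -- compute ∫ h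
  have hval : (∫ p : ℝ × ℝ, h p) = (1/α) * ((2*n) * c1) + (2/α) * ((2*n) * c2) := by
    rw [hh, integral_add hprod1 hprod2]
    rw [Measure.volume_eq_prod, integral_prod_mul, integral_prod_mul]
    have e1 : ∫ x, f1 x = 1/α := by
      rw [hf1, integral_indicator measurableSet_Iio, hIioVal]
    have e2 : ∫ x, f2 x = 2/α := by rw [hf2]; exact hTotVal
    have e3 : ∫ x, k1 x = (2*n) * c1 := by
      rw [hk1, integral_indicator_const _ measurableSet_Icc]
      rw [measureReal_def, Real.volume_Icc, smul_eq_mul]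
      congr 1
      rw [ENNReal.toReal_ofReal (by linarith)]
      ring
    have e4 : ∫ x, k2 x = (2*n) * c2 := by
      rw [hk2, integral_indicator_const _ measurableSet_Icc]
      rw [measureReal_def, Real.volume_Icc, smul_eq_mul]
      congr 1
      rw [ENNReal.toReal_ofReal (by linarith)]
      ring
    rw [e1, e2, e3, e4]
  -- final arithmetic
  have h4 : (4:ℝ) ^ ρ ≤ 1 + 3 * ρ := by
    have hconv := convexOn_exp.2 (mem_univ (0:ℝ)) (mem_univ (Real.log 4))
      (by linarith : (0:ℝ) ≤ 1 - ρ) hρ0.le (by ring)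
    simp only [smul_eq_mul, mul_zero, zero_add, Real.exp_zero,
      Real.exp_log (by norm_num : (0:ℝ) < 4)] at hconv
    rw [Real.rpow_def_of_pos (by norm_num : (0:ℝ) < 4)]
    calc Real.exp (Real.log 4 * ρ) = Real.exp (ρ * Real.log 4) := by ring_nf
    _ ≤ (1 - ρ) * 1 + ρ * 4 := by simpa using hconv
    _ = 1 + 3 * ρ := by ring
  have hA : 0 < α ^ ρ := rpow_pos_of_pos hα _
  have hAe : α ^ (2 * ρ + 1) = (α ^ ρ) * (α ^ ρ) * α := by
    rw [show 2 * ρ + 1 = ρ + ρ + 1 by ring, Real.rpow_add hα, Real.rpow_add hα, Real.rpow_one]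
  have hB : (2:ℝ) ^ ρ * (2:ℝ) ^ ρ ≤ 1 + 3 * ρ := by
    calc (2:ℝ) ^ ρ * (2:ℝ) ^ ρ = ((2:ℝ) * 2) ^ ρ := (Real.mul_rpow (by norm_num) (by norm_num)).symm
    _ = (4:ℝ) ^ ρ := by norm_num
    _ ≤ 1 + 3 * ρ := h4
  have hc1v : c1 = ((α ^ ρ) * (α ^ ρ))⁻¹ := by
    rw [hc1, one_div, Real.inv_rpow hα.le, sq, mul_inv]
  have hc2v : c2 = ((2:ℝ) ^ ρ * (2:ℝ) ^ ρ) / ((α ^ ρ) * (α ^ ρ)) := by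
    rw [hc2, Real.div_rpow (by norm_num) hα.le, sq, div_mul_div_comm]
  have hB0 : (0:ℝ) < (2:ℝ) ^ ρ := rpow_pos_of_pos (by norm_num) _
  refine le_trans step1 ?_
  rw [hval, hAe, hc1v, hc2v]
  have hXne : (α ^ ρ : ℝ) ≠ 0 := hA.ne'
  have hαne : α ≠ 0 := hα.ne'
  have key : (1/α) * ((2*n) * ((α ^ ρ) * (α ^ ρ))⁻¹)
      + (2/α) * ((2*n) * (((2:ℝ) ^ ρ * (2:ℝ) ^ ρ) / ((α ^ ρ) * (α ^ ρ))))
      = (2*n*(1 + 2 * ((2:ℝ) ^ ρ * (2:ℝ) ^ ρ))) / ((α ^ ρ) * (α ^ ρ) * α) := by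
    field_simp
  rw [key, div_le_div_iff₀ (by positivity) (by positivity)]
  nlinarith [mul_le_mul_of_nonneg_left hB
    (mul_nonneg hn.le (mul_pos (mul_pos hA hA) hα).le), hn.le,
    (mul_pos (mul_pos hA hA) hα).le]
end
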